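/- Let $g$ be an impact graph with positive probability, with root set $R=R(g)$, and let $M=M(g,C^\ast)$ be its impact exchange matrix. Then the maximum cycle mean satisfies $\lambda(M)<1$. -/

import Mathlib

open scoped NNReal

noncomputable section

open MeasureTheory ProbabilityTheory

/-- Max-times matrix-vector product: `(A ⊙ x) i = max_j (A i j * x j)`. -/
def maxMul {d : ℕ} (A : Matrix (Fin d) (Fin d) ℝ≥0) (x : Fin d → ℝ≥0) : Fin d → ℝ≥0 :=
  fun i => Finset.univ.sup fun j => A i j * x j

/-- Max-times matrix product. -/
def maxMatMul {d : ℕ} (A B : Matrix (Fin d) (Fin d) ℝ≥0) : Matrix (Fin d) (Fin d) ℝ≥0 :=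
  Matrix.of fun i j => Finset.univ.sup fun l => A i l * B l j

/-- Max-times matrix powers, with `A^{⊙0}` the identity matrix. -/
def maxPow {d : ℕ} (A : Matrix (Fin d) (Fin d) ℝ≥0) : ℕ → Matrix (Fin d) (Fin d) ℝ≥0
  | 0 => Matrix.of fun i j => if i = j then 1 else 0
  | k + 1 => maxMatMul A (maxPow A k)

/-- Kleene star `C^* = I ∨ C ∨ C^{⊙2} ∨ ⋯ ∨ C^{⊙(d-1)}` over the max-times semiring. -/
def kleene {d : ℕ} (C : Matrix (Fin d) (Fin d) ℝ≥0) : Matrix (Fin d) (Fin d) ℝ≥0 :=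
  Matrix.of fun i j => (Finset.range d).sup fun k => maxPow C k i j

/-- The support digraph of `C` (edge `j → i` iff `C i j ≠ 0`) has no directed cycle. -/
def SupportAcyclic {d : ℕ} (C : Matrix (Fin d) (Fin d) ℝ≥0) : Prop :=
  ¬ ∃ (r : ℕ) (c : Fin (r + 1) → Fin d), Function.Injective c ∧ ∀ t, C (c (t + 1)) (c t) ≠ 0

/-- Edge `j → i` of the impact graph of the innovation vector `z`:
`i ≠ j` and `X i = c^*_{ij} * z j`, where `X = C^* ⊙ z`. -/
def impactEdge {d : ℕ} (C : Matrix (Fin d) (Fin d) ℝ≥0) (z : Fin d → ℝ≥0) (i j : Fin d) : Prop :=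
  i ≠ j ∧ maxMul (kleene C) z i = kleene C i j * z j

/-- Weight of the directed cycle `c 0 → c 1 → ⋯ → c r → c 0`
(the edge `j → i` contributes the entry `A i j`). -/
def cycleWeight {d : ℕ} (A : Matrix (Fin d) (Fin d) ℝ≥0) {r : ℕ}
    (c : Fin (r + 1) → Fin d) : ℝ≥0 :=
  ∏ t, A (c (t + 1)) (c t)

/-- Maximum cycle mean: the supremum of the geometric means of the weights of
(simple) directed cycles of the digraph of `A`; it is `0` when this digraph is acyclic. -/
noncomputable def maxCycleMean {d : ℕ} (A : Matrix (Fin d) (Fin d) ℝ≥0) : ℝ≥0 :=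
  sSup {m | ∃ (r : ℕ) (c : Fin (r + 1) → Fin d),
    Function.Injective c ∧ m = cycleWeight A c ^ (((r : ℝ) + 1)⁻¹)}

open Classical in
/-- The impact exchange matrix `M(g, C^*)` of a graph `g` (edge `j → i` encoded as `g i j`),
defined on the root set of `g` and padded by zeros elsewhere:
`m_{r r'} = max_{i ∈ ch_g(r)} Cs i r' / Cs i r` for distinct roots `r ≠ r'`. -/
noncomputable def exchangeMatrix {d : ℕ} (Cs : Matrix (Fin d) (Fin d) ℝ≥0)
    (g : Fin d → Fin d → Prop) : Matrix (Fin d) (Fin d) ℝ≥0 :=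
  Matrix.of fun r r' =>
    if r ≠ r' ∧ (∀ j, ¬ g r j) ∧ (∀ j, ¬ g r' j) then
      Finset.univ.sup fun i => if g i r then Cs i r' / Cs i r else 0
    else 0

lemma nullAux {Ω : Type*} [MeasurableSpace Ω] (μ : Measure Ω) [IsProbabilityMeasure μ]
    (f h : Ω → ℝ≥0) (hf : Measurable f) (hh : Measurable h) (hind : IndepFun f h μ)
    (hhatom : ∀ c, μ {ω | h ω = c} = 0) (c : ℝ≥0) : μ {ω | h ω = c * f ω} = 0 := by
  have hsc : IsClosed {p : ℝ≥0 × ℝ≥0 | p.2 = c * p.1} :=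
    isClosed_eq continuous_snd (continuous_const.mul continuous_fst)
  have hs : MeasurableSet {p : ℝ≥0 × ℝ≥0 | p.2 = c * p.1} := hsc.measurableSet
  have hmap : μ.map (fun ω => (f ω, h ω)) = (μ.map f).prod (μ.map h) :=
    (indepFun_iff_map_prod_eq_prod_map_map hf.aemeasurable hh.aemeasurable).mp hind
  have hph : IsProbabilityMeasure (μ.map h) := Measure.isProbabilityMeasure_map hh.aemeasurable
  have h1 : μ {ω | h ω = c * f ω}
      = μ.map (fun ω => (f ω, h ω)) {p : ℝ≥0 × ℝ≥0 | p.2 = c * p.1} := by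
    rw [Measure.map_apply (hf.prodMk hh) hs]; rfl
  rw [h1, hmap, Measure.prod_apply hs]
  have h2 : ∀ x : ℝ≥0, (μ.map h) (Prod.mk x ⁻¹' {p : ℝ≥0 × ℝ≥0 | p.2 = c * p.1}) = 0 := by
    intro x
    have hpre : Prod.mk x ⁻¹' {p : ℝ≥0 × ℝ≥0 | p.2 = c * p.1} = {c * x} := by
      ext y; simp [Set.mem_singleton_iff]
    rw [hpre, Measure.map_apply hh (measurableSet_singleton _)]
    have : h ⁻¹' {c * x} = {ω | h ω = c * x} := by ext ω; simp
    rw [this]; exact hhatom _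
  simp only [h2]; simp

/-- If `g` is an impact graph with positive probability, then the maximum cycle mean of its
impact exchange matrix is strictly less than `1`. -/
theorem stmt9 {d : ℕ} (C : Matrix (Fin d) (Fin d) ℝ≥0) (hC : SupportAcyclic C)
    {Ω : Type*} [MeasurableSpace Ω] (μ : Measure Ω) [IsProbabilityMeasure μ]
    (Z : Fin d → Ω → ℝ≥0) (hmeas : ∀ i, Measurable (Z i))
    (hindep : iIndepFun Z μ)
    (hpos : ∀ i ω, 0 < Z i ω)
    (hatom : ∀ i (c : ℝ≥0), μ {ω | Z i ω = c} = 0)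
    (g : Fin d → Fin d → Prop)
    (hg : μ {ω | ∀ i j, impactEdge C (fun k => Z k ω) i j ↔ g i j} ≠ 0) :
    maxCycleMean (exchangeMatrix (kleene C) g) < 1 := by
  classical
  set Cs := kleene C with hCs
  set B : Set Ω := ⋃ (i : Fin d) (r : Fin d) (r' : Fin d) (_ : r ≠ r'),
      {ω | Z r' ω = (Cs i r / Cs i r') * Z r ω} with hB
  have hBnull : μ B = 0 := by
    refine measure_iUnion_null fun i => measure_iUnion_null fun r =>
      measure_iUnion_null fun r' => measure_iUnion_null fun hne => ?_
    exact nullAux μ (Z r) (Z r') (hmeas r) (hmeas r') (hindep.indepFun hne) (hatom r') _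
  set E : Set Ω := {ω | ∀ i j, impactEdge C (fun k => Z k ω) i j ↔ g i j} with hE
  have hEB : μ (E \ B) ≠ 0 := by
    intro h0
    apply hg
    have hsub : E ⊆ (E \ B) ∪ B := by
      intro ω hω
      by_cases hωB : ω ∈ B
      · exact Or.inr hωB
      · exact Or.inl ⟨hω, hωB⟩
    have hle : μ E ≤ μ (E \ B) + μ B := (measure_mono hsub).trans (measure_union_le _ _)
    rw [h0, hBnull, add_zero] at hle
    exact le_antisymm hle zero_le
  obtain ⟨ω, hωE, hωB⟩ := nonempty_of_measure_ne_zero hEB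
  have hωE' : ∀ i j, impactEdge C (fun k => Z k ω) i j ↔ g i j := hωE
  set z : Fin d → ℝ≥0 := fun k => Z k ω with hzdef
  have hzpos : ∀ k, 0 < z k := fun k => hpos k ω
  have hωB' : ∀ (i r r' : Fin d), r ≠ r' → z r' ≠ (Cs i r / Cs i r') * z r := by
    intro i r r' hne heq
    apply hωB
    rw [hB]
    exact Set.mem_iUnion.mpr ⟨i, Set.mem_iUnion.mpr ⟨r, Set.mem_iUnion.mpr ⟨r',
      Set.mem_iUnion.mpr ⟨hne, heq⟩⟩⟩⟩
  have hdiag : ∀ i : Fin d, (1 : ℝ≥0) ≤ Cs i i := by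
    intro i
    have h0 : maxPow C 0 i i = 1 := by simp [maxPow]
    have h1 : maxPow C 0 i i ≤ (Finset.range d).sup fun k => maxPow C k i i :=
      Finset.le_sup (f := fun k => maxPow C k i i) (Finset.mem_range.mpr i.pos)
    rw [h0] at h1
    exact h1
  have hmaxpos : ∀ i : Fin d, 0 < maxMul Cs z i := by
    intro i
    have h1 : Cs i i * z i ≤ maxMul Cs z i :=
      Finset.le_sup (f := fun j => Cs i j * z j) (Finset.mem_univ i)
    exact lt_of_lt_of_le (mul_pos (lt_of_lt_of_le one_pos (hdiag i)) (hzpos i)) h1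
  have key : ∀ r r' : Fin d, exchangeMatrix Cs g r r' * z r' < z r := by
    intro r r'
    by_cases hcond : r ≠ r' ∧ (∀ j, ¬ g r j) ∧ (∀ j, ¬ g r' j)
    · have hent : exchangeMatrix Cs g r r' =
          Finset.univ.sup fun i => if g i r then Cs i r' / Cs i r else 0 := by
        simp only [exchangeMatrix, Matrix.of_apply, if_pos hcond]
      have hdivpos : 0 < z r / z r' := div_pos (hzpos r) (hzpos r')
      have hsup : (Finset.univ.sup fun i => if g i r then Cs i r' / Cs i r else 0)
          < z r / z r' := by
        rw [Finset.sup_lt_iff hdivpos]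
        intro i _
        by_cases hgir : g i r
        · rw [if_pos hgir]
          obtain ⟨hir, heq⟩ := (hωE' i r).mpr hgir
          rw [← hCs] at heq
          have hposmax : 0 < Cs i r * z r := by
            rw [← heq]; exact hmaxpos i
          have hCir : 0 < Cs i r := by
            rcases (zero_le : (0 : ℝ≥0) ≤ Cs i r).lt_or_eq with h | h
            · exact h
            · rw [← h, zero_mul] at hposmax; exact absurd hposmax (lt_irrefl 0)
          have hle : Cs i r' * z r' ≤ Cs i r * z r := by
            have h2 : Cs i r' * z r' ≤ maxMul Cs z i :=
              Finset.le_sup (f := fun j => Cs i j * z j) (Finset.mem_univ r')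
            rwa [heq] at h2
          have hne2 : Cs i r' * z r' ≠ Cs i r * z r := by
            intro heq2
            have hCir' : Cs i r' ≠ 0 := by
              intro h0
              rw [h0, zero_mul] at heq2
              exact absurd heq2.symm (ne_of_gt hposmax)
            apply hωB' i r r' hcond.1
            rw [div_mul_eq_mul_div, eq_div_iff hCir', mul_comm]
            exact heq2
          have hlt : Cs i r' * z r' < Cs i r * z r := lt_of_le_of_ne hle hne2
          rw [div_lt_div_iff₀ hCir (hzpos r')]
          rw [mul_comm (z r) (Cs i r)]
          exact hlt
        · rw [if_neg hgir]; exact hdivpos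
      rw [hent]
      calc (Finset.univ.sup fun i => if g i r then Cs i r' / Cs i r else 0) * z r'
          < (z r / z r') * z r' := mul_lt_mul_of_pos_right hsup (hzpos r')
        _ = z r := div_mul_cancel₀ _ (ne_of_gt (hzpos r'))
    · have h0 : exchangeMatrix Cs g r r' = 0 := by
        simp only [exchangeMatrix, Matrix.of_apply, if_neg hcond]
      rw [h0, zero_mul]; exact hzpos r
  have hcyc : ∀ (r : ℕ) (c : Fin (r + 1) → Fin d),
      cycleWeight (exchangeMatrix Cs g) c < 1 := by
    intro r c
    have hP : 0 < ∏ t, z (c t) := Finset.prod_pos fun t _ => hzpos _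
    have hshift : ∏ t : Fin (r + 1), z (c (t + 1)) = ∏ t, z (c t) := by
      have := Equiv.prod_comp (Equiv.addRight (1 : Fin (r + 1))) (fun t => z (c t))
      simpa [Equiv.coe_addRight] using this
    have hstep : ∏ t : Fin (r + 1), exchangeMatrix Cs g (c (t + 1)) (c t) * z (c t)
        < ∏ t : Fin (r + 1), z (c (t + 1)) := by
      by_cases hzero : ∃ t : Fin (r + 1), exchangeMatrix Cs g (c (t + 1)) (c t) * z (c t) = 0
      · obtain ⟨t, ht⟩ := hzero
        rw [Finset.prod_eq_zero (Finset.mem_univ t) ht, hshift]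
        exact hP
      · push_neg at hzero
        exact Finset.prod_lt_prod_of_nonempty
          (fun t _ => pos_iff_ne_zero.mpr (hzero t))
          (fun t _ => key (c (t + 1)) (c t))
          Finset.univ_nonempty
    have hlt : cycleWeight (exchangeMatrix Cs g) c * ∏ t, z (c t) < 1 * ∏ t, z (c t) := by
      rw [one_mul, cycleWeight, ← Finset.prod_mul_distrib]
      rw [← hshift]
      exact hstep
    exact lt_of_mul_lt_mul_right hlt zero_le
  show sSup {m | ∃ (r : ℕ) (c : Fin (r + 1) → Fin d),
      Function.Injective c ∧ m = cycleWeight (exchangeMatrix Cs g) c ^ (((r : ℝ) + 1)⁻¹)} < 1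
  set S := {m | ∃ (r : ℕ) (c : Fin (r + 1) → Fin d),
      Function.Injective c ∧ m = cycleWeight (exchangeMatrix Cs g) c ^ (((r : ℝ) + 1)⁻¹)}
    with hSdef
  have hS1 : ∀ m ∈ S, m < 1 := by
    rintro m ⟨r, c, hinj, rfl⟩
    exact NNReal.rpow_lt_one (hcyc r c) (by positivity)
  have hfin : S.Finite := by
    have hsub : S ⊆ Set.range (fun p : (Σ r : Fin (d + 1), Fin (r.1 + 1) → Fin d) =>
        cycleWeight (exchangeMatrix Cs g) p.2 ^ (((p.1.1 : ℝ) + 1)⁻¹)) := by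
      rintro m ⟨r, c, hinj, rfl⟩
      have hr : r + 1 ≤ d := by
        simpa using Fintype.card_le_of_injective c hinj
      exact ⟨⟨⟨r, by omega⟩, c⟩, rfl⟩
    exact (Set.finite_range _).subset hsub
  rcases Set.eq_empty_or_nonempty S with hemp | hne
  · rw [hemp, csSup_empty]
    exact zero_lt_one
  · exact hS1 _ (hne.csSup_mem hfin)
end
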